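/- Let A_ξ ∈ L(E) satisfy A_ξ + A_ξ* = 2Q(ξ − (2ϑ)^{-1})Q* with (A_ξ, Q) controllable. If ξ − (2ϑ)^{-1} > 0 (as a self-adjoint operator) then sp(A_ξ) is contained in the open right half-plane, and if ξ − (2ϑ)^{-1} < 0 then sp(A_ξ) is contained in the open left half-plane. In particular sp(A_ξ) ∩ iℝ = ∅. -/
import Mathlib


open Matrix
open scoped ComplexOrder

/-- If `A_ξ + A_ξ* = 2Q(ξ − (2ϑ)⁻¹)Q*` with `(A_ξ, Q)` controllable (no eigenvector of
`A_ξ` in `Ker Q*`), then `ξ − (2ϑ)⁻¹ > 0` forces `sp(A_ξ)` into the open right half-plane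
and `ξ − (2ϑ)⁻¹ < 0` forces it into the open left half-plane; in either case
`sp(A_ξ) ∩ iℝ = ∅`. -/
theorem spectrum_halfplane_of_dissipative
    {n m : ℕ} (Aξ : Matrix (Fin n) (Fin n) ℂ) (Q : Matrix (Fin n) (Fin m) ℂ)
    (ξ ϑ : Matrix (Fin m) (Fin m) ℂ) (hξ : ξ.IsHermitian) (hϑ : ϑ.PosDef)
    (hdiss : Aξ + Aξᴴ = (2 : ℂ) • (Q * (ξ - ((2 : ℂ) • ϑ)⁻¹) * Qᴴ))
    (hctrl : ∀ (u : Fin n → ℂ) (z : ℂ), Aξ *ᵥ u = z • u → Qᴴ *ᵥ u = 0 → u = 0) :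
    ((ξ - ((2 : ℂ) • ϑ)⁻¹).PosDef →
      ∀ (z : ℂ) (u : Fin n → ℂ), u ≠ 0 → Aξ *ᵥ u = z • u → 0 < z.re) ∧
    ((((2 : ℂ) • ϑ)⁻¹ - ξ).PosDef →
      ∀ (z : ℂ) (u : Fin n → ℂ), u ≠ 0 → Aξ *ᵥ u = z • u → z.re < 0) ∧
    (((ξ - ((2 : ℂ) • ϑ)⁻¹).PosDef ∨ (((2 : ℂ) • ϑ)⁻¹ - ξ).PosDef) →
      ∀ (z : ℂ) (u : Fin n → ℂ), u ≠ 0 → Aξ *ᵥ u = z • u → z.re ≠ 0) := by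
  set M : Matrix (Fin m) (Fin m) ℂ := ξ - ((2 : ℂ) • ϑ)⁻¹ with hM
  have key : ∀ (z : ℂ) (u : Fin n → ℂ), u ≠ 0 → Aξ *ᵥ u = z • u →
      Qᴴ *ᵥ u ≠ 0 ∧
      z.re * (star u ⬝ᵥ u).re = (star (Qᴴ *ᵥ u) ⬝ᵥ (M *ᵥ (Qᴴ *ᵥ u))).re := by
    intro z u hu heig
    have hv : Qᴴ *ᵥ u ≠ 0 := fun h => hu (hctrl u z heig h)
    refine ⟨hv, ?_⟩
    have hstar : star (Qᴴ *ᵥ u) = star u ᵥ* Q := by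
      rw [star_mulVec, conjTranspose_conjTranspose]
    have h2 : star u ⬝ᵥ (Aξᴴ *ᵥ u) = star z * (star u ⬝ᵥ u) := by
      rw [dotProduct_mulVec, ← star_mulVec, heig, star_smul, smul_dotProduct,
        smul_eq_mul]
    have e1 : star u ⬝ᵥ ((Aξ + Aξᴴ) *ᵥ u) = (z + star z) * (star u ⬝ᵥ u) := by
      rw [add_mulVec, dotProduct_add, heig, dotProduct_smul, h2, smul_eq_mul]
      ring
    have e2 : star u ⬝ᵥ ((Aξ + Aξᴴ) *ᵥ u)
        = (2 : ℂ) * (star (Qᴴ *ᵥ u) ⬝ᵥ (M *ᵥ (Qᴴ *ᵥ u))) := by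
      rw [hdiss, smul_mulVec, dotProduct_smul, ← mulVec_mulVec, ← mulVec_mulVec,
        dotProduct_mulVec (star u) Q, ← hstar, smul_eq_mul]
    have hEq := e1.symm.trans e2
    have hs : star u ⬝ᵥ u = ((star u ⬝ᵥ u).re : ℂ) := by
      have h0 : (0 : ℂ) ≤ star u ⬝ᵥ u := dotProduct_star_self_nonneg u
      have := (Complex.le_def.mp h0).2
      exact Complex.ext rfl (by simpa using this.symm)
    rw [hs, Complex.star_def, Complex.add_conj] at hEq
    have hre := congrArg Complex.re hEq
    simp only [← Complex.ofReal_mul, Complex.ofReal_re, Complex.mul_re,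
      Complex.re_ofNat, Complex.im_ofNat, zero_mul, sub_zero] at hre
    linarith [hre]
  have hcsq : ∀ u : Fin n → ℂ, u ≠ 0 → 0 < (star u ⬝ᵥ u).re := by
    intro u hu
    have : (0:ℂ) < star u ⬝ᵥ u := by
      rw [dotProduct_star_self_pos_iff]; exact hu
    exact (Complex.lt_def.mp this).1
  have hP : M.PosDef →
      ∀ (z : ℂ) (u : Fin n → ℂ), u ≠ 0 → Aξ *ᵥ u = z • u → 0 < z.re := by
    intro hpos z u hu heig
    obtain ⟨hv, hEq⟩ := key z u hu heig
    have hr := hpos.re_dotProduct_pos hv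
    simp only [RCLike.re_to_complex] at hr
    have hc := hcsq u hu
    nlinarith [hEq, hr, hc]
  have hN : (((2 : ℂ) • ϑ)⁻¹ - ξ).PosDef →
      ∀ (z : ℂ) (u : Fin n → ℂ), u ≠ 0 → Aξ *ᵥ u = z • u → z.re < 0 := by
    intro hneg z u hu heig
    obtain ⟨hv, hEq⟩ := key z u hu heig
    have hr := hneg.re_dotProduct_pos hv
    simp only [RCLike.re_to_complex] at hr
    have hflip : star (Qᴴ *ᵥ u) ⬝ᵥ ((((2 : ℂ) • ϑ)⁻¹ - ξ) *ᵥ (Qᴴ *ᵥ u))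
        = - (star (Qᴴ *ᵥ u) ⬝ᵥ (M *ᵥ (Qᴴ *ᵥ u))) := by
      rw [hM, ← neg_sub ξ ((2 : ℂ) • ϑ)⁻¹, neg_mulVec, dotProduct_neg]
    rw [hflip] at hr
    simp only [Complex.neg_re] at hr
    have hc := hcsq u hu
    nlinarith [hEq, hr, hc]
  exact ⟨hP, hN, fun h z u hu he => h.elim
    (fun hp => ne_of_gt (hP hp z u hu he))
    (fun hn => ne_of_lt (hN hn z u hu he))⟩
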